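/- If G=(V,E) is a central-max-point tolerance graph (CMPTG) and u,v∈V are distinct non-adjacent vertices, then the subgraph of G induced on the set N(u)∩N(v) of common neighbors of u and v is a proper interval graph. -/

import Mathlib

variable {V : Type*}

/-- An MPT representation of a simple graph: each vertex `u` gets an interval
`[a u, b u]` with a point `p u` inside it, and distinct vertices `u, v` are adjacent
iff both `p u` and `p v` lie in the intersection of the two intervals. -/
def IsMPTRep (G : SimpleGraph V) (a b p : V → ℝ) : Prop :=
  (∀ u, a u ≤ b u) ∧ (∀ u, p u ∈ Set.Icc (a u) (b u)) ∧
    ∀ u v : V, u ≠ v →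
      (G.Adj u v ↔ p u ∈ Set.Icc (a u) (b u) ∩ Set.Icc (a v) (b v) ∧
                   p v ∈ Set.Icc (a u) (b u) ∩ Set.Icc (a v) (b v))

/-- A central-max-point tolerance graph: an MPT representation where every point is
the center of its interval. -/
def IsCMPTG (G : SimpleGraph V) : Prop :=
  ∃ a b : V → ℝ, IsMPTRep G a b (fun u => (a u + b u) / 2)

/-- A proper interval graph: each vertex gets a closed real interval, distinct vertices
are adjacent iff their intervals intersect, and no interval properly contains another. -/
def IsProperIntervalGraph (G : SimpleGraph V) : Prop :=
  ∃ a b : V → ℝ, (∀ u, a u ≤ b u) ∧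
    (∀ u v : V, u ≠ v →
      (G.Adj u v ↔ (Set.Icc (a u) (b u) ∩ Set.Icc (a v) (b v)).Nonempty)) ∧
    ∀ u v : V, u ≠ v → ¬(a u ≤ a v ∧ b v ≤ b u ∧ ¬(a u = a v ∧ b u = b v))

/-- Core construction: if every vertex of `s` has interval reaching left of `c` and right
of `d`, and center strictly between `c` and `2d - c`, then the induced graph on `s` is a
proper interval graph. -/
lemma cmptg_core (G : SimpleGraph V) (a b : V → ℝ)
    (hrep : IsMPTRep G a b (fun u => (a u + b u) / 2)) (s : Set V) (c d : ℝ)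
    (h1 : ∀ w ∈ s, a w ≤ c) (h2 : ∀ w ∈ s, d ≤ b w)
    (h3 : ∀ w ∈ s, c < (a w + b w) / 2) (h4 : ∀ w ∈ s, (a w + b w) / 2 < 2 * d - c) :
    IsProperIntervalGraph (G.induce s) := by
  classical
  set M : ℝ := max (d - c) 0 with hMdef
  have hM0 : 0 ≤ M := le_max_right _ _
  have hMdc : d - c ≤ M := le_max_left _ _
  set f : s → ℝ := fun w =>
    if (a w.1 + b w.1) / 2 ≤ d then min (b w.1) (2 * d - c) - M else (a w.1 + b w.1) / 2
    with hf
  refine ⟨f, fun w => f w + M, fun w => le_add_of_nonneg_right hM0, ?_, ?_⟩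
  · intro w x hne
    have hwx : (w : V) ≠ x := fun h => hne (Subtype.ext h)
    have hab_w := hrep.1 w.1
    have hab_x := hrep.1 x.1
    have h1w := h1 w.1 w.2; have h2w := h2 w.1 w.2
    have h3w := h3 w.1 w.2; have h4w := h4 w.1 w.2
    have h1x := h1 x.1 x.2; have h2x := h2 x.1 x.2
    have h3x := h3 x.1 x.2; have h4x := h4 x.1 x.2
    have hcd : c < d := by linarith
    have hadj := hrep.2.2 w.1 x.1 hwx
    simp only [Set.mem_inter_iff, Set.mem_Icc] at hadj
    rw [show (G.induce s).Adj w x ↔ G.Adj w.1 x.1 from Iff.rfl, hadj,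
      Set.Icc_inter_Icc, Set.nonempty_Icc]
    simp only [sup_le_iff, le_inf_iff, hf]
    by_cases hLw : (a w.1 + b w.1) / 2 ≤ d
    · by_cases hLx : (a x.1 + b x.1) / 2 ≤ d
      · -- both left
        have hβw1 : d ≤ min (b w.1) (2 * d - c) := le_min h2w (by linarith)
        have hβw2 : min (b w.1) (2 * d - c) ≤ 2 * d - c := min_le_right _ _
        have hβx1 : d ≤ min (b x.1) (2 * d - c) := le_min h2x (by linarith)
        have hβx2 : min (b x.1) (2 * d - c) ≤ 2 * d - c := min_le_right _ _
        rw [if_pos hLw, if_pos hLx]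
        constructor
        · intro _
          exact ⟨⟨by linarith, by linarith⟩, by linarith, by linarith⟩
        · intro _
          exact ⟨⟨⟨by linarith, by linarith⟩, by linarith, by linarith⟩,
            ⟨by linarith, by linarith⟩, by linarith, by linarith⟩
      · -- w left, x right
        push_neg at hLx
        have hβw1 : d ≤ min (b w.1) (2 * d - c) := le_min h2w (by linarith)
        have hβw2 : min (b w.1) (2 * d - c) ≤ 2 * d - c := min_le_right _ _
        have hβw3 : min (b w.1) (2 * d - c) ≤ b w.1 := min_le_left _ _
        rw [if_pos hLw, if_neg (not_le.mpr hLx)]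
        constructor
        · rintro ⟨⟨⟨-, -⟩, -, -⟩, ⟨-, hpxbw⟩, -, -⟩
          have hpxmin : (a x.1 + b x.1) / 2 ≤ min (b w.1) (2 * d - c) :=
            le_min hpxbw (by linarith)
          exact ⟨⟨by linarith, by linarith⟩, by linarith, by linarith⟩
        · rintro ⟨⟨-, hx1⟩, -, -⟩
          have hpxmin : (a x.1 + b x.1) / 2 ≤ min (b w.1) (2 * d - c) := by linarith
          have hpxbw : (a x.1 + b x.1) / 2 ≤ b w.1 := le_trans hpxmin hβw3
          exact ⟨⟨⟨by linarith, by linarith⟩, by linarith, by linarith⟩,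
            ⟨by linarith, hpxbw⟩, by linarith, by linarith⟩
    · by_cases hLx : (a x.1 + b x.1) / 2 ≤ d
      · -- w right, x left
        push_neg at hLw
        have hβx1 : d ≤ min (b x.1) (2 * d - c) := le_min h2x (by linarith)
        have hβx2 : min (b x.1) (2 * d - c) ≤ 2 * d - c := min_le_right _ _
        have hβx3 : min (b x.1) (2 * d - c) ≤ b x.1 := min_le_left _ _
        rw [if_neg (not_le.mpr hLw), if_pos hLx]
        constructor
        · rintro ⟨⟨⟨-, -⟩, -, hpwbx⟩, ⟨-, -⟩, -, -⟩
          have hpwmin : (a w.1 + b w.1) / 2 ≤ min (b x.1) (2 * d - c) :=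
            le_min hpwbx (by linarith)
          exact ⟨⟨by linarith, by linarith⟩, by linarith, by linarith⟩
        · rintro ⟨⟨-, -⟩, hw1, -⟩
          have hpwmin : (a w.1 + b w.1) / 2 ≤ min (b x.1) (2 * d - c) := by linarith
          have hpwbx : (a w.1 + b w.1) / 2 ≤ b x.1 := le_trans hpwmin hβx3
          exact ⟨⟨⟨by linarith, by linarith⟩, by linarith, hpwbx⟩,
            ⟨by linarith, by linarith⟩, by linarith, by linarith⟩
      · -- both right
        push_neg at hLw hLx
        rw [if_neg (not_le.mpr hLw), if_neg (not_le.mpr hLx)]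
        constructor
        · intro _
          exact ⟨⟨by linarith, by linarith⟩, by linarith, by linarith⟩
        · intro _
          exact ⟨⟨⟨by linarith, by linarith⟩, by linarith, by linarith⟩,
            ⟨by linarith, by linarith⟩, by linarith, by linarith⟩
  · rintro w x hne ⟨hle, hle', hneq⟩
    have hle'' : f x + M ≤ f w + M := hle'
    have h' : f x ≤ f w := by linarith
    have he : f w = f x := le_antisymm hle h'
    exact hneq ⟨he, by show f w + M = f x + M; rw [he]⟩

/-- Reflecting a centered MPT representation gives a centered MPT representation. -/
lemma cmptg_reflect (G : SimpleGraph V) (a b : V → ℝ)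
    (h : IsMPTRep G a b (fun u => (a u + b u) / 2)) :
    IsMPTRep G (fun u => -(b u)) (fun u => -(a u)) (fun u => (-(b u) + -(a u)) / 2) := by
  refine ⟨fun u => by simpa using neg_le_neg (h.1 u), fun u => ?_, fun u v huv => ?_⟩
  · have := h.1 u
    simp only [Set.mem_Icc]
    constructor <;> linarith
  · rw [h.2.2 u v huv]
    simp only [Set.mem_inter_iff, Set.mem_Icc]
    constructor <;>
      rintro ⟨⟨⟨p1, p2⟩, p3, p4⟩, ⟨p5, p6⟩, p7, p8⟩ <;>
      exact ⟨⟨⟨by linarith, by linarith⟩, by linarith, by linarith⟩,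
        ⟨by linarith, by linarith⟩, by linarith, by linarith⟩

/-- In a CMPTG, the subgraph induced on the common neighborhood of two distinct
non-adjacent vertices is a proper interval graph. -/
theorem cmptg_common_neighborhood_properInterval [Fintype V] (G : SimpleGraph V)
    (hG : IsCMPTG G) (u v : V) (huv : u ≠ v) (hadj : ¬ G.Adj u v) :
    IsProperIntervalGraph (G.induce (G.neighborSet u ∩ G.neighborSet v)) := by
  obtain ⟨a, b, hrep⟩ := hG
  set s : Set V := G.neighborSet u ∩ G.neighborSet v with hs
  have key : ∀ z w : V, G.Adj z w →
      a w ≤ (a z + b z) / 2 ∧ (a z + b z) / 2 ≤ b w ∧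
      a z ≤ (a w + b w) / 2 ∧ (a w + b w) / 2 ≤ b z := by
    intro z w hzw
    have h := (hrep.2.2 z w hzw.ne).mp hzw
    simp only [Set.mem_inter_iff, Set.mem_Icc] at h
    exact ⟨h.1.2.1, h.1.2.2, h.2.1.1, h.2.1.2⟩
  have hmem : ∀ w ∈ s, G.Adj u w ∧ G.Adj v w := by
    intro w hw
    exact ⟨hw.1, hw.2⟩
  have hcases : (a u + b u) / 2 < a v ∨ b v < (a u + b u) / 2 ∨
      (a v + b v) / 2 < a u ∨ b u < (a v + b v) / 2 := by
    by_contra h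
    push_neg at h
    obtain ⟨hc1, hc2, hc3, hc4⟩ := h
    refine hadj ((hrep.2.2 u v huv).mpr ?_)
    have hu := hrep.2.1 u
    have hv := hrep.2.1 v
    simp only [Set.mem_Icc] at hu hv
    simp only [Set.mem_inter_iff, Set.mem_Icc]
    exact ⟨⟨⟨hu.1, hu.2⟩, hc1, hc2⟩, ⟨hc3, hc4⟩, hv.1, hv.2⟩
  rcases hcases with hA | hB | hA' | hB'
  · -- p u < a v
    refine cmptg_core G a b hrep s ((a u + b u) / 2) ((a v + b v) / 2) ?_ ?_ ?_ ?_ <;>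
      intro w hw <;>
      obtain ⟨hu1, hu2, hu3, hu4⟩ := key u w (hmem w hw).1 <;>
      obtain ⟨hv1, hv2, hv3, hv4⟩ := key v w (hmem w hw).2 <;>
      linarith
  · -- b v < p u : reflected, with roles (v, u) ↦ (c, d) = (-p u, -p v)
    refine cmptg_core G (fun w => -(b w)) (fun w => -(a w)) (cmptg_reflect G a b hrep) s
      (-((a u + b u) / 2)) (-((a v + b v) / 2)) ?_ ?_ ?_ ?_ <;>
      intro w hw <;>
      obtain ⟨hu1, hu2, hu3, hu4⟩ := key u w (hmem w hw).1 <;>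
      obtain ⟨hv1, hv2, hv3, hv4⟩ := key v w (hmem w hw).2 <;>
      linarith
  · -- p v < a u
    refine cmptg_core G a b hrep s ((a v + b v) / 2) ((a u + b u) / 2) ?_ ?_ ?_ ?_ <;>
      intro w hw <;>
      obtain ⟨hu1, hu2, hu3, hu4⟩ := key u w (hmem w hw).1 <;>
      obtain ⟨hv1, hv2, hv3, hv4⟩ := key v w (hmem w hw).2 <;>
      linarith
  · -- b u < p v : reflected, with (c, d) = (-p v, -p u)
    refine cmptg_core G (fun w => -(b w)) (fun w => -(a w)) (cmptg_reflect G a b hrep) s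
      (-((a v + b v) / 2)) (-((a u + b u) / 2)) ?_ ?_ ?_ ?_ <;>
      intro w hw <;>
      obtain ⟨hu1, hu2, hu3, hu4⟩ := key u w (hmem w hw).1 <;>
      obtain ⟨hv1, hv2, hv3, hv4⟩ := key v w (hmem w hw).2 <;>
      linarith
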